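/- Suppose h : ℝ^m → ℝ ∪ {+∞} is a convex piecewise linear-quadratic function, c : ℝ^n → ℝ^m is C², f = h ∘ c, and x̄ ∈ dom f. If the transversality condition Null(Dc(x̄)ᵀ) ∩ par(∂h(c(x̄))) = {0} holds, then the basic constraint qualification Null(Dc(x̄)ᵀ) ∩ N(c(x̄) | dom h) = {0} holds, where N denotes the normal cone to the convex set dom h. -/

import Mathlib

open Matrix Set

noncomputable section

abbrev V (m : ℕ) := Fin m → ℝ

/-- Effective domain of an extended-real-valued function. -/
def domf {m : ℕ} (h : V m → EReal) : Set (V m) := {x | h x < ⊤}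

/-- Convex subdifferential. -/
def subdiff {m : ℕ} (h : V m → EReal) (c : V m) : Set (V m) :=
  {y | ∀ z, h c + ((y ⬝ᵥ (z - c) : ℝ) : EReal) ≤ h z}

/-- Normal cone of convex analysis to a convex set `D` at `c`. -/
def normalCone {m : ℕ} (D : Set (V m)) (c : V m) : Set (V m) :=
  {v | ∀ d ∈ D, v ⬝ᵥ (d - c) ≤ 0}

/-- The subspace parallel to a convex set `C`, namely `ℝ(C − C)`. -/
def parSet {m : ℕ} (C : Set (V m)) : Set (V m) :=
  {x | ∃ t : ℝ, ∃ a ∈ C, ∃ b ∈ C, x = t • (a - b)}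

/-- Polyhedral sets: finite systems of linear inequalities. -/
def IsPolyhedral {m : ℕ} (C : Set (V m)) : Prop :=
  ∃ (s : ℕ) (a : Fin s → V m) (α : Fin s → ℝ), C = {x | ∀ j, a j ⬝ᵥ x ≤ α j}

/-- Convexity of an extended-real-valued function, via its epigraph. -/
def ConvexFun {m : ℕ} (h : V m → EReal) : Prop :=
  Convex ℝ {p : V m × ℝ | h p.1 ≤ (p.2 : EReal)}

/-- `h` is proper piecewise linear-quadratic: the domain is a finite union of
polyhedral sets on each of which `h` is given by a quadratic expression. -/
def IsPLQ {m : ℕ} (h : V m → EReal) : Prop :=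
  (∃ x, h x < ⊤) ∧ (∀ x, h x ≠ ⊥) ∧
  ∃ (K : ℕ) (C : Fin (K + 1) → Set (V m)) (Q : Fin (K + 1) → Matrix (Fin m) (Fin m) ℝ)
    (b : Fin (K + 1) → V m) (β : Fin (K + 1) → ℝ),
    domf h = ⋃ k, C k ∧
    (∀ k, IsPolyhedral (C k)) ∧
    (∀ k, (Q k).IsSymm) ∧
    (∀ k, ∀ x ∈ C k,
      h x = (((1 / 2) * (x ⬝ᵥ (Q k *ᵥ x)) + b k ⬝ᵥ x + β k : ℝ) : EReal))

/-- Transversality implies the basic constraint qualification. -/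
theorem stmt2 {n m : ℕ} (h : V m → EReal) (c : V n → V m)
    (hplq : IsPLQ h) (hconv : ConvexFun h) (hc : ContDiff ℝ 2 c)
    (xbar : V n) (hdom : c xbar ∈ domf h)
    (htrans : {y : V m | ∀ d, y ⬝ᵥ (fderiv ℝ c xbar d) = 0}
        ∩ parSet (subdiff h (c xbar)) = {0}) :
    {y : V m | ∀ d, y ⬝ᵥ (fderiv ℝ c xbar d) = 0}
      ∩ normalCone (domf h) (c xbar) = {0} := by
  ext v
  simp only [Set.mem_inter_iff, Set.mem_singleton_iff, Set.mem_setOf_eq]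
  constructor
  · rintro ⟨hvN, hvC⟩
    have h0 : (0 : V m) ∈ ({y : V m | ∀ d, y ⬝ᵥ (fderiv ℝ c xbar d) = 0}
        ∩ parSet (subdiff h (c xbar))) := by
      rw [htrans]; rfl
    obtain ⟨-, t, a, ha, b, hb, -⟩ := h0
    have hav : a + v ∈ subdiff h (c xbar) := by
      intro z
      by_cases hz : h z < ⊤
      · have h1 := ha z
        have h2 : v ⬝ᵥ (z - c xbar) ≤ 0 := hvC z hz
        calc h (c xbar) + (((a + v) ⬝ᵥ (z - c xbar) : ℝ) : EReal)
            ≤ h (c xbar) + ((a ⬝ᵥ (z - c xbar) : ℝ) : EReal) := by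
              apply add_le_add_right
              have : (a + v) ⬝ᵥ (z - c xbar) ≤ a ⬝ᵥ (z - c xbar) := by
                rw [add_dotProduct]; linarith
              exact_mod_cast this
          _ ≤ h z := h1
      · have hz' : h z = ⊤ := top_le_iff.mp (not_lt.mp hz)
        rw [hz']; exact le_top
    have hvp : v ∈ parSet (subdiff h (c xbar)) :=
      ⟨1, a + v, hav, a, ha, by simp⟩
    have : v ∈ ({y : V m | ∀ d, y ⬝ᵥ (fderiv ℝ c xbar d) = 0}
        ∩ parSet (subdiff h (c xbar))) := ⟨hvN, hvp⟩
    rw [htrans] at this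
    exact this
  · rintro rfl
    exact ⟨fun d => by simp, fun d _ => by simp [normalCone]⟩
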